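/- Let t > 0 and γ = i·t. Then the map z ↦ conj(z) + 1/2 induces an anti-holomorphic involution of X_γ (namely x ↦ p(1/2) + σ(x), where σ is induced by conjugation), and this involution has no fixed points. (This is the fixed-point-free involution t_{1/2} ∘ α_{(−,1)} of region A, of topological type (0,1), a Klein bottle.) -/
import Mathlib


open Complex

/-- The lattice `Λ_γ ⊆ ℂ` generated by `1` and `γ`. -/
noncomputable def Lambda (γ : ℂ) : AddSubgroup ℂ := AddSubgroup.closure {1, γ}

/-- The complex torus `X_γ = ℂ / Λ_γ`. -/
abbrev XTorus (γ : ℂ) := ℂ ⧸ Lambda γ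

/-- The quotient map `p : ℂ → X_γ`. -/
noncomputable def tproj (γ : ℂ) : ℂ → XTorus γ := QuotientAddGroup.mk

lemma mem_Lambda_iff (γ z : ℂ) :
    z ∈ Lambda γ ↔ ∃ m n : ℤ, (m : ℂ) + (n : ℂ) * γ = z := by
  rw [Lambda, AddSubgroup.mem_closure_pair]
  simp [zsmul_eq_mul]

lemma conj_mem_Lambda (t : ℝ) {z : ℂ} (hz : z ∈ Lambda (Complex.I * t)) :
    (starRingEnd ℂ) z ∈ Lambda (Complex.I * t) := by
  rw [mem_Lambda_iff] at hz ⊢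
  obtain ⟨m, n, rfl⟩ := hz
  refine ⟨m, -n, ?_⟩
  simp [map_add, map_mul, Complex.conj_I, Complex.conj_ofReal]

/-- For `γ = i t` with `t > 0` (region `A`): the map `z ↦ conj z + 1/2` induces an
anti-holomorphic involution of `X_γ` which has no fixed points (the quotient is a
Klein bottle, topological type `(0,1)`). -/
theorem klein_bottle_involution_no_fixed_points (t : ℝ) (ht : 0 < t) :
    ∃ τ : XTorus (Complex.I * t) → XTorus (Complex.I * t),
      (∀ z : ℂ, τ (tproj (Complex.I * t) z) = tproj (Complex.I * t) (starRingEnd ℂ z + 1 / 2)) ∧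
      (∀ x, τ (τ x) = x) ∧
      (∀ x, τ x ≠ x) := by
  set γ : ℂ := Complex.I * t with hγ
  have key : ∀ a b : ℂ, -a + b ∈ Lambda γ →
      -(starRingEnd ℂ a + 1 / 2) + (starRingEnd ℂ b + 1 / 2) ∈ Lambda γ := by
    intro a b hab
    have := conj_mem_Lambda t hab
    rw [map_add, map_neg] at this
    convert this using 1
    ring
  refine ⟨Quotient.map' (fun z => starRingEnd ℂ z + 1 / 2)
    (fun a b hab => by
      rw [QuotientAddGroup.leftRel_apply] at hab ⊢
      exact key a b hab), ?_, ?_, ?_⟩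
  · intro z; rfl
  · intro x
    induction x using QuotientAddGroup.induction_on with
    | H z =>
      show (QuotientAddGroup.mk (starRingEnd ℂ (starRingEnd ℂ z + 1 / 2) + 1 / 2) : XTorus γ)
        = QuotientAddGroup.mk z
      have hval : starRingEnd ℂ (starRingEnd ℂ z + 1 / 2) + 1 / 2 = z + 1 := by
        rw [map_add, Complex.conj_conj]
        have h2 : (starRingEnd ℂ) (1 / 2 : ℂ) = 1 / 2 := by
          rw [show ((1 / 2 : ℂ)) = ((1 / 2 : ℝ) : ℂ) by push_cast; ring, Complex.conj_ofReal]
        rw [h2]; ring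
      rw [hval, QuotientAddGroup.eq, mem_Lambda_iff]
      exact ⟨-1, 0, by push_cast; ring⟩
  · intro x
    induction x using QuotientAddGroup.induction_on with
    | H z =>
      show (QuotientAddGroup.mk (starRingEnd ℂ z + 1 / 2) : XTorus γ) ≠ QuotientAddGroup.mk z
      rw [Ne, QuotientAddGroup.eq, mem_Lambda_iff]
      rintro ⟨m, n, h⟩
      have hre := congrArg Complex.re h
      simp [Complex.add_re, Complex.mul_re, Complex.neg_re, Complex.conj_re, hγ] at hre
      have h2 : ((2 * m : ℤ) : ℝ) = -1 := by push_cast; linarith [hre]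
      have h3 : (2 * m : ℤ) = -1 := by exact_mod_cast h2
      omega
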